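/- arXiv:1205.1163 — 7 statements merged into one kernel-verified Lean document; each statement's English description precedes it below -/
import Mathlib

section
/- Let α, δ be real numbers with 0 < δ ≤ 4, and define P(u,v,w) = α + u² + v² + w² + uvw − δ(u+v+w). Then P(u,v,w) ≥ 0 for all u ≥ 0, v ≥ 0, w ≥ 0 if and only if (δ+1)(3 − 2√(δ+1)) ≥ 1 − α and δ² ≤ 2α. -/
private lemma auxG (t x y z : ℝ) (ht0 : 0 ≤ t) (ht2 : t^2 ≤ 2)
    (hx : -t ≤ x) (hy : -t ≤ y) (hz : -t ≤ z) (hz0 : z ≤ 0) :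
    0 ≤ x^2 + y^2 + z^2 + t*(x*y + y*z + z*x) + x*y*z := by
  have h1 : (0:ℝ) < 2 + t + z := by linarith
  have htle : t ≤ 2 := by nlinarith
  have h2 : (0:ℝ) ≤ 2 - (t + z) := by linarith
  have h3 : (0:ℝ) ≤ 2 + t + z - t^2 := by linarith
  have h4 : 0 ≤ 4*(2+t+z) * (x^2 + y^2 + z^2 + t*(x*y + y*z + z*x) + x*y*z) := by
    nlinarith [sq_nonneg ((2+t+z)*(x+y) + 2*t*z),
      mul_nonneg (mul_nonneg h1.le h2) (sq_nonneg (x-y)),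
      mul_nonneg h3 (sq_nonneg z)]
  nlinarith [h4, h1]

private lemma keyG (t x y z : ℝ) (ht0 : 0 ≤ t) (ht2 : t^2 ≤ 2)
    (hx : -t ≤ x) (hy : -t ≤ y) (hz : -t ≤ z) :
    0 ≤ x^2 + y^2 + z^2 + t*(x*y + y*z + z*x) + x*y*z := by
  rcases le_or_gt z 0 with h | h
  · exact auxG t x y z ht0 ht2 hx hy hz h
  rcases le_or_gt y 0 with h' | h'
  · nlinarith [auxG t x z y ht0 ht2 hx hz hy h']
  rcases le_or_gt x 0 with h'' | h''
  · nlinarith [auxG t y z x ht0 ht2 hy hz hx h'']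
  · nlinarith [mul_nonneg (mul_nonneg h''.le h'.le) h.le,
      mul_nonneg ht0 (mul_nonneg h''.le h'.le),
      mul_nonneg ht0 (mul_nonneg h'.le h.le),
      mul_nonneg ht0 (mul_nonneg h.le h''.le)]

theorem stmt0 (α δ : ℝ) (hδ0 : 0 < δ) (hδ4 : δ ≤ 4) :
    (∀ u v w : ℝ, 0 ≤ u → 0 ≤ v → 0 ≤ w →
      0 ≤ α + u^2 + v^2 + w^2 + u*v*w - δ*(u+v+w)) ↔
    ((δ+1)*(3 - 2*Real.sqrt (δ+1)) ≥ 1 - α ∧ δ^2 ≤ 2*α) := by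
  set s := Real.sqrt (δ+1) with hsdef
  have hs : s^2 = δ + 1 := Real.sq_sqrt (by linarith)
  have hs0 : 0 ≤ s := Real.sqrt_nonneg _
  have hs1 : 1 ≤ s := by nlinarith
  have heq : (δ+1)*(3 - 2*s) = 3*s^2 - 2*s^3 := by linear_combination (2*s - 3) * hs
  constructor
  · intro h
    constructor
    · have ht0 : (0:ℝ) ≤ s - 1 := by linarith
      have h1 := h (s-1) (s-1) (s-1) ht0 ht0 ht0
      have hval : 3*(s-1)^2 + (s-1)^3 - δ*(3*(s-1)) = -(2*s^3 - 3*s^2 + 1) := by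
        linear_combination (3*(s-1)) * hs
      nlinarith [h1]
    · have h2 := h (δ/2) (δ/2) 0 (by linarith) (by linarith) le_rfl
      nlinarith [h2]
  · rintro ⟨hc, -⟩
    intro u v w hu hv hw
    have hα : 2*s^3 - 3*s^2 + 1 ≤ α := by linarith [heq]
    have ht2 : (s-1)^2 ≤ 2 := by
      nlinarith [mul_nonneg (sub_nonneg.2 hs1) (show (0:ℝ) ≤ 5 - s^2 by nlinarith)]
    have ht0 : (0:ℝ) ≤ s - 1 := by linarith
    have hG := keyG (s-1) (u-(s-1)) (v-(s-1)) (w-(s-1)) ht0 ht2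
      (by linarith) (by linarith) (by linarith)
    have hδt : δ = (s-1)^2 + 2*(s-1) := by linear_combination -hs
    rw [hδt]
    nlinarith [hG, hα]
end

section
/- Let δ be a real number with 0 < δ ≤ 4. Then the function P(u,v,w) = α + u² + v² + w² + uvw − δ(u+v+w) has exactly one critical point in the open region u > 0, v > 0, w > 0, namely u = v = w = √(δ+1) − 1, and at this point P equals (δ+1)(3 − 2√(δ+1)) + α − 1. -/
theorem stmt1 (α δ : ℝ) (hδ0 : 0 < δ) (hδ4 : δ ≤ 4) :
    (∀ u v w : ℝ, 0 < u → 0 < v → 0 < w →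
      ((2*u + v*w = δ ∧ 2*v + u*w = δ ∧ 2*w + u*v = δ) ↔
        (u = Real.sqrt (δ+1) - 1 ∧ v = Real.sqrt (δ+1) - 1 ∧
         w = Real.sqrt (δ+1) - 1))) ∧
    (let s := Real.sqrt (δ+1) - 1;
      α + s^2 + s^2 + s^2 + s*s*s - δ*(s+s+s)
        = (δ+1)*(3 - 2*Real.sqrt (δ+1)) + α - 1) := by
  have ht : Real.sqrt (δ+1) ^ 2 = δ + 1 := Real.sq_sqrt (by linarith)
  have ht1 : (1:ℝ) ≤ Real.sqrt (δ+1) := by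
    nlinarith [Real.sqrt_nonneg (δ+1)]
  set t := Real.sqrt (δ+1) with htdef
  constructor
  · intro u v w hu hv hw
    constructor
    · rintro ⟨h1, h2, h3⟩
      have huv : u = v := by
        rcases mul_eq_zero.mp (show (u - v) * (2 - w) = 0 by nlinarith) with h | h
        · linarith
        · nlinarith
      have hvw : v = w := by
        rcases mul_eq_zero.mp (show (v - w) * (2 - u) = 0 by nlinarith) with h | h
        · linarith
        · nlinarith
      subst huv hvw
      have : (u + 1 - t) * (u + 1 + t) = 0 := by nlinarith
      rcases mul_eq_zero.mp this with h | h
      · exact ⟨by linarith, by linarith, by linarith⟩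
      · nlinarith
    · rintro ⟨rfl, rfl, rfl⟩
      refine ⟨by nlinarith, by nlinarith, by nlinarith⟩
  · simp only
    nlinarith [sq_nonneg t]
end

section
/- Let γ ∈ [0,1] and let κ be a real number satisfying (2 − √2)/(γ+1) ≤ κ ≤ min{2, (2 + √2)/(γ+1)}. Then for all y₁ ≥ 0, y₂ ≥ 0: 1 + 2(y₁² + y₂² + y₁²y₂²) − κ(y₁² + y₂² + 2γ y₁y₂) ≥ 0. -/
theorem stmt7 (γ κ : ℝ) (hγ : γ ∈ Set.Icc (0:ℝ) 1)
    (hκ1 : (2 - Real.sqrt 2)/(γ+1) ≤ κ)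
    (hκ2 : κ ≤ min 2 ((2 + Real.sqrt 2)/(γ+1)))
    (y₁ y₂ : ℝ) (h1 : 0 ≤ y₁) (h2 : 0 ≤ y₂) :
    0 ≤ 1 + 2*(y₁^2 + y₂^2 + y₁^2*y₂^2) - κ*(y₁^2 + y₂^2 + 2*γ*y₁*y₂) := by
  obtain ⟨hγ0, hγ1⟩ := hγ
  have hpos : (0:ℝ) < γ + 1 := by linarith
  have hk2 : κ ≤ 2 := le_trans hκ2 (min_le_left _ _)
  have hk3 : κ ≤ (2 + Real.sqrt 2)/(γ+1) := le_trans hκ2 (min_le_right _ _)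
  have hk4 : κ * (γ + 1) ≤ 2 + Real.sqrt 2 := by
    have := (le_div_iff₀ hpos).mp hk3
    linarith
  have hs2 : Real.sqrt 2 ^ 2 = 2 := Real.sq_sqrt (by norm_num)
  have hq : 0 ≤ y₁ * y₂ := mul_nonneg h1 h2
  have hA : 0 ≤ 2*(y₁*y₂)^2 - 2*Real.sqrt 2*(y₁*y₂) + 1 := by
    nlinarith [sq_nonneg (Real.sqrt 2*(y₁*y₂) - 1), hs2]
  have hB : 0 ≤ (2-κ)*(y₁-y₂)^2 := mul_nonneg (by linarith) (sq_nonneg _)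
  have hC : 0 ≤ 2*(y₁*y₂)*(2+Real.sqrt 2-κ*(γ+1)) :=
    mul_nonneg (by linarith) (by linarith)
  nlinarith [hA, hB, hC]
end

section
/- Let γ ∈ [0,1] and let κ be a real number with 0 < κ ≤ min{2, (2+√3)/(2γ+1)}. Then for all y₁, y₂, y₃ ≥ 0: 1 + (2 − κ)(y₁² + y₂² + y₃²) + 2(y₁²y₂² + y₁²y₃² + y₂²y₃²) + 2y₁²y₂²y₃² − 2κγ(y₁y₂ + y₁y₃ + y₂y₃) ≥ 0. -/
lemma L1 (t a b c : ℝ) (ht : 0 ≤ t) (ha : -t ≤ a) (hb : -t ≤ b) (hc : -t ≤ c) :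
    -t*(a^2+b^2+c^2) ≤ 2*(a*b*c) := by
  rcases le_or_gt 0 (b*c) with h | h
  · nlinarith [mul_nonneg h (by linarith : (0:ℝ) ≤ a+t),
      mul_nonneg ht (sq_nonneg (b-c)), mul_nonneg ht (sq_nonneg a)]
  rcases le_or_gt 0 (a*c) with h2 | h2
  · nlinarith [mul_nonneg h2 (by linarith : (0:ℝ) ≤ b+t),
      mul_nonneg ht (sq_nonneg (a-c)), mul_nonneg ht (sq_nonneg b)]
  · have hab : 0 ≤ a*b := by nlinarith [mul_pos_of_neg_of_neg h h2, sq_nonneg c]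
    nlinarith [mul_nonneg hab (by linarith : (0:ℝ) ≤ c+t),
      mul_nonneg ht (sq_nonneg (a-b)), mul_nonneg ht (sq_nonneg c)]

lemma keylem (r u v w : ℝ) (hr : r^2 = 3) (hr0 : 1 ≤ r)
    (hu : 0 ≤ u) (hv : 0 ≤ v) (hw : 0 ≤ w) :
    r*(u+v+w) ≤ 1 + 2*(u^2+v^2+w^2) + 2*(u*v*w) := by
  have ht : (0:ℝ) ≤ (r-1)/2 := by linarith
  have key := L1 ((r-1)/2) (u-(r-1)/2) (v-(r-1)/2) (w-(r-1)/2) ht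
    (by linarith) (by linarith) (by linarith)
  have hr3 : r ≤ 3 := by nlinarith
  nlinarith [key, sq_nonneg (u+v+w-3*(r-1)/2), sq_nonneg (u-(r-1)/2),
    sq_nonneg (v-(r-1)/2), sq_nonneg (w-(r-1)/2),
    mul_nonneg (by linarith : (0:ℝ) ≤ 3-r) (sq_nonneg (u-(r-1)/2)),
    mul_nonneg (by linarith : (0:ℝ) ≤ 3-r) (sq_nonneg (v-(r-1)/2)),
    mul_nonneg (by linarith : (0:ℝ) ≤ 3-r) (sq_nonneg (w-(r-1)/2))]

theorem stmt9 (γ κ : ℝ) (hγ : γ ∈ Set.Icc (0:ℝ) 1)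
    (hκ0 : 0 < κ) (hκ : κ ≤ min 2 ((2 + Real.sqrt 3)/(2*γ+1)))
    (y₁ y₂ y₃ : ℝ) (h1 : 0 ≤ y₁) (h2 : 0 ≤ y₂) (h3 : 0 ≤ y₃) :
    0 ≤ 1 + (2 - κ)*(y₁^2 + y₂^2 + y₃^2)
        + 2*(y₁^2*y₂^2 + y₁^2*y₃^2 + y₂^2*y₃^2) + 2*y₁^2*y₂^2*y₃^2
        - 2*κ*γ*(y₁*y₂ + y₁*y₃ + y₂*y₃) := by
  obtain ⟨hγ0, hγ1⟩ := hγ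
  set r := Real.sqrt 3 with hrdef
  have hr : r^2 = 3 := Real.sq_sqrt (by norm_num)
  have hr0 : 1 ≤ r := by nlinarith [Real.sqrt_nonneg 3]
  have hκ2 : κ ≤ 2 := le_trans hκ (min_le_left _ _)
  have hden : (0:ℝ) < 2*γ+1 := by linarith
  have hκr : κ * (2*γ+1) ≤ 2 + r := by
    have := le_trans hκ (min_le_right _ _)
    calc κ * (2*γ+1) ≤ ((2+r)/(2*γ+1)) * (2*γ+1) := by
          exact mul_le_mul_of_nonneg_right this (le_of_lt hden)
      _ = 2 + r := by field_simp
  have key := keylem r (y₁*y₂) (y₁*y₃) (y₂*y₃) hr hr0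
    (mul_nonneg h1 h2) (mul_nonneg h1 h3) (mul_nonneg h2 h3)
  have hs : 0 ≤ y₁*y₂ + y₁*y₃ + y₂*y₃ := by positivity
  have hqs : y₁*y₂ + y₁*y₃ + y₂*y₃ ≤ y₁^2 + y₂^2 + y₃^2 := by
    nlinarith [sq_nonneg (y₁-y₂), sq_nonneg (y₁-y₃), sq_nonneg (y₂-y₃)]
  have f1 : 0 ≤ (2-κ) * ((y₁^2 + y₂^2 + y₃^2) - (y₁*y₂ + y₁*y₃ + y₂*y₃)) :=
    mul_nonneg (by linarith) (by linarith)
  have f2 : 0 ≤ (2 + r - κ*(2*γ+1)) * (y₁*y₂ + y₁*y₃ + y₂*y₃) :=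
    mul_nonneg (by linarith) hs
  nlinarith [key, f1, f2]
end

section
/- Let θ ≥ max{1/4, (γ+1)/(4+2√2)} with γ ∈ [0,1]. Then for all reals z₁, z₂ ≤ 0 and z₀ with |z₀| ≤ 2γ√(z₁z₂), one has 2(1−θz₁)(1−θz₂) − 1 + (z₀ + z₁ + z₂)/2 ≥ 0. -/
theorem stmt14 (θ γ : ℝ) (hγ : γ ∈ Set.Icc (0:ℝ) 1)
    (hθ : θ ≥ max (1/4) ((γ+1)/(4 + 2*Real.sqrt 2)))
    (z₀ z₁ z₂ : ℝ) (h1 : z₁ ≤ 0) (h2 : z₂ ≤ 0)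
    (h0 : |z₀| ≤ 2*γ*Real.sqrt (z₁*z₂)) :
    0 ≤ 2*(1 - θ*z₁)*(1 - θ*z₂) - 1 + (z₀ + z₁ + z₂)/2 := by
  obtain ⟨hγ0, hγ1⟩ := hγ
  have hθ4 : (1:ℝ)/4 ≤ θ := le_trans (le_max_left _ _) hθ
  have hθγ : (γ+1)/(4 + 2*Real.sqrt 2) ≤ θ := le_trans (le_max_right _ _) hθ
  have hs2 : Real.sqrt 2 ^ 2 = 2 := Real.sq_sqrt (by norm_num)
  have hs2' : (0:ℝ) ≤ Real.sqrt 2 := Real.sqrt_nonneg 2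
  have hden : (0:ℝ) < 4 + 2*Real.sqrt 2 := by positivity
  have hkey : γ + 1 ≤ θ * (4 + 2*Real.sqrt 2) := by
    have := (div_le_iff₀ hden).mp hθγ
    linarith
  set t := Real.sqrt (z₁*z₂) with ht_def
  have ht : 0 ≤ t := Real.sqrt_nonneg _
  have ht2 : t^2 = z₁*z₂ := Real.sq_sqrt (by nlinarith)
  have hz0 : -(2*γ*t) ≤ z₀ := neg_le_of_abs_le h0
  have hsum : z₁ + z₂ ≤ -(2*t) := by nlinarith [sq_nonneg (z₁ - z₂)]
  have step1 : 1 + 2*θ^2*t^2 + (4*θ-1-γ)*t ≤ 2*(1 - θ*z₁)*(1 - θ*z₂) - 1 + (z₀ + z₁ + z₂)/2 := by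
    nlinarith [mul_nonneg (by linarith : (0:ℝ) ≤ 2*θ - 1/2) (by linarith : (0:ℝ) ≤ -(z₁+z₂) - 2*t)]
  have hA : 0 ≤ 2*(θ*t)^2 - 2*(Real.sqrt 2*(θ*t)) + 1 := by
    have h := sq_nonneg (Real.sqrt 2*(θ*t) - 1)
    have h2' : (Real.sqrt 2*(θ*t))^2 = 2*(θ*t)^2 := by rw [mul_pow, hs2]
    nlinarith
  have hB : (0:ℝ) ≤ (4*θ - 1 - γ + 2*(Real.sqrt 2 * θ)) * t :=
    mul_nonneg (by nlinarith) ht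
  have step2 : (0:ℝ) ≤ 1 + 2*θ^2*t^2 + (4*θ-1-γ)*t := by nlinarith [hA, hB]
  linarith
end

section
/- Let θ ≥ max{1/4, (2γ+1)/(4+2√3)} with γ ∈ [0,1]. Then for all reals z₁, z₂, z₃ ≤ 0 and z₀ with |z₀| ≤ 2γ(√(z₁z₂) + √(z₁z₃) + √(z₂z₃)), one has 2(1−θz₁)(1−θz₂)(1−θz₃) − 1 + (z₀ + z₁ + z₂ + z₃)/2 ≥ 0. -/
set_option maxHeartbeats 1000000

lemma Tcase15 (t a b c : ℝ) (ht0 : 0 ≤ t) (ht1 : t ≤ 1) (hta : -t ≤ a) (hbc : 0 ≤ b*c) :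
    0 ≤ 2*(a^2+b^2+c^2) + 2*t*(a*b+a*c+b*c) + 2*(a*b*c) := by
  nlinarith [mul_nonneg hbc (by linarith : (0:ℝ) ≤ t + a), sq_nonneg (2*a+t*(b+c)),
    mul_nonneg (mul_nonneg (by linarith : (0:ℝ) ≤ 1-t) (by linarith : (0:ℝ) ≤ 1+t))
      (sq_nonneg (b+c)),
    sq_nonneg (b-c), sq_nonneg b, sq_nonneg c]

lemma Tnonneg15 (t a b c : ℝ) (ht0 : 0 ≤ t) (ht1 : t ≤ 1)
    (ha : -t ≤ a) (hb : -t ≤ b) (hc : -t ≤ c) :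
    0 ≤ 2*(a^2+b^2+c^2) + 2*t*(a*b+a*c+b*c) + 2*(a*b*c) := by
  rcases le_or_gt 0 (b*c) with h | hbc
  · exact Tcase15 t a b c ht0 ht1 ha h
  rcases le_or_gt 0 (a*c) with h | hac
  · have := Tcase15 t b a c ht0 ht1 hb h
    linarith [this]
  · have hab : 0 ≤ a*b := by
      nlinarith [mul_pos_of_neg_of_neg hac hbc, sq_nonneg c]
    have := Tcase15 t c a b ht0 ht1 hc hab
    linarith [this]

lemma key15 (s p q r : ℝ) (hs : s^2 = 3) (hs1 : 1 ≤ s) (hp : 0 ≤ p) (hq : 0 ≤ q) (hr : 0 ≤ r) :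
    s*(p+q+r) ≤ 1 + 2*(p^2+q^2+r^2) + 2*(p*q*r) := by
  have hs3 : s ≤ 3 := by nlinarith
  have ht0 : 0 ≤ (s-1)/2 := by linarith
  have ht1 : (s-1)/2 ≤ 1 := by linarith
  have hT := Tnonneg15 ((s-1)/2) (p-(s-1)/2) (q-(s-1)/2) (r-(s-1)/2) ht0 ht1
    (by linarith) (by linarith) (by linarith)
  have key_eq : 1 + 2*(p^2+q^2+r^2) + 2*(p*q*r) - s*(p+q+r)
      = 2*((p-(s-1)/2)^2+(q-(s-1)/2)^2+(r-(s-1)/2)^2)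
        + 2*((s-1)/2)*((p-(s-1)/2)*(q-(s-1)/2)+(p-(s-1)/2)*(r-(s-1)/2)
            +(q-(s-1)/2)*(r-(s-1)/2))
        + 2*((p-(s-1)/2)*(q-(s-1)/2)*(r-(s-1)/2)) := by
    linear_combination ((p+q+r-s)/2) * hs
  linarith [hT, key_eq]

theorem stmt15 (θ γ : ℝ) (hγ : γ ∈ Set.Icc (0:ℝ) 1)
    (hθ : θ ≥ max (1/4) ((2*γ+1)/(4 + 2*Real.sqrt 3)))
    (z₀ z₁ z₂ z₃ : ℝ) (h1 : z₁ ≤ 0) (h2 : z₂ ≤ 0) (h3 : z₃ ≤ 0)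
    (h0 : |z₀| ≤ 2*γ*(Real.sqrt (z₁*z₂) + Real.sqrt (z₁*z₃) + Real.sqrt (z₂*z₃))) :
    0 ≤ 2*(1 - θ*z₁)*(1 - θ*z₂)*(1 - θ*z₃) - 1 + (z₀ + z₁ + z₂ + z₃)/2 := by
  obtain ⟨hγ0, hγ1⟩ := hγ
  set s12 := Real.sqrt (z₁*z₂) with hs12def
  set s13 := Real.sqrt (z₁*z₃) with hs13def
  set s23 := Real.sqrt (z₂*z₃) with hs23def
  have hz12 : 0 ≤ z₁*z₂ := by nlinarith [mul_nonneg (neg_nonneg.2 h1) (neg_nonneg.2 h2)]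
  have hz13 : 0 ≤ z₁*z₃ := by nlinarith [mul_nonneg (neg_nonneg.2 h1) (neg_nonneg.2 h3)]
  have hz23 : 0 ≤ z₂*z₃ := by nlinarith [mul_nonneg (neg_nonneg.2 h2) (neg_nonneg.2 h3)]
  have h12sq : s12^2 = z₁*z₂ := Real.sq_sqrt hz12
  have h13sq : s13^2 = z₁*z₃ := Real.sq_sqrt hz13
  have h23sq : s23^2 = z₂*z₃ := Real.sq_sqrt hz23
  have h12nn : 0 ≤ s12 := Real.sqrt_nonneg _
  have h13nn : 0 ≤ s13 := Real.sqrt_nonneg _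
  have h23nn : 0 ≤ s23 := Real.sqrt_nonneg _
  have h12le : s12 ≤ -((z₁+z₂)/2) := by
    have h := Real.sqrt_le_sqrt (show z₁*z₂ ≤ ((z₁+z₂)/2)^2 by nlinarith [sq_nonneg (z₁-z₂)])
    rwa [Real.sqrt_sq_eq_abs, abs_of_nonpos (by linarith : (z₁+z₂)/2 ≤ 0)] at h
  have h13le : s13 ≤ -((z₁+z₃)/2) := by
    have h := Real.sqrt_le_sqrt (show z₁*z₃ ≤ ((z₁+z₃)/2)^2 by nlinarith [sq_nonneg (z₁-z₃)])
    rwa [Real.sqrt_sq_eq_abs, abs_of_nonpos (by linarith : (z₁+z₃)/2 ≤ 0)] at h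
  have h23le : s23 ≤ -((z₂+z₃)/2) := by
    have h := Real.sqrt_le_sqrt (show z₂*z₃ ≤ ((z₂+z₃)/2)^2 by nlinarith [sq_nonneg (z₂-z₃)])
    rwa [Real.sqrt_sq_eq_abs, abs_of_nonpos (by linarith : (z₂+z₃)/2 ≤ 0)] at h
  have hprod : s12 * s13 * s23 = -(z₁*z₂*z₃) := by
    rw [hs12def, hs13def, hs23def, ← Real.sqrt_mul hz12, ← Real.sqrt_mul (mul_nonneg hz12 hz13),
      show z₁*z₂*(z₁*z₃)*(z₂*z₃) = (z₁*z₂*z₃)^2 by ring, Real.sqrt_sq_eq_abs,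
      abs_of_nonpos (by nlinarith : z₁*z₂*z₃ ≤ 0)]
  -- facts about θ, γ, √3
  have hsq3 : (Real.sqrt 3)^2 = 3 := Real.sq_sqrt (by norm_num)
  have hs1 : (1:ℝ) ≤ Real.sqrt 3 := by nlinarith [Real.sqrt_nonneg 3, hsq3]
  have hθ4 : (1:ℝ)/4 ≤ θ := le_trans (le_max_left _ _) hθ
  have hθnn : 0 ≤ θ := by linarith
  have hd : (0:ℝ) < 4 + 2*Real.sqrt 3 := by nlinarith
  have hθγ : 2*γ+1 ≤ θ*(4 + 2*Real.sqrt 3) := by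
    have h := le_trans (le_max_right (1/4) _) hθ
    rw [div_le_iff₀ hd] at h
    linarith
  -- key inequality instance
  have K := key15 (Real.sqrt 3) (θ*s12) (θ*s13) (θ*s23) hsq3 hs1
    (mul_nonneg hθnn h12nn) (mul_nonneg hθnn h13nn) (mul_nonneg hθnn h23nn)
  have e12 : (θ*s12)^2 = θ^2*(z₁*z₂) := by rw [mul_pow, h12sq]
  have e13 : (θ*s13)^2 = θ^2*(z₁*z₃) := by rw [mul_pow, h13sq]
  have e23 : (θ*s23)^2 = θ^2*(z₂*z₃) := by rw [mul_pow, h23sq]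
  have eprod : θ*s12*(θ*s13)*(θ*s23) = -(θ^3*(z₁*z₂*z₃)) := by
    rw [show θ*s12*(θ*s13)*(θ*s23) = θ^3*(s12*s13*s23) by ring, hprod]; ring
  rw [e12, e13, e23, eprod] at K
  -- remaining linear pieces
  have h0' : -(2*γ*(s12 + s13 + s23)) ≤ z₀ := (abs_le.mp h0).1
  have F2 : 0 ≤ (2*θ - 1/2) * ((-z₁ - z₂ - z₃) - (s12 + s13 + s23)) :=
    mul_nonneg (by linarith) (by linarith)
  have F4 : 0 ≤ (θ*(4 + 2*Real.sqrt 3) - (2*γ+1))/2 * (s12 + s13 + s23) :=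
    mul_nonneg (by linarith) (by linarith)
  nlinarith [K, F2, F4, h0']
end

section
/- Let k ≥ 2 be an integer and define h(α) = kα / (2(1+α)^k − 1) for α > 0. Then h attains a maximum on (0,∞), and its maximum value a_k is the unique solution a ∈ (0, 1/2) of the equation 2a(1 + (1−a)/(k−1))^{k−1} = 1. -/
theorem stmt16 (k : ℕ) (hk : 2 ≤ k) :
    ∃ α : ℝ, 0 < α ∧
      (∀ β : ℝ, 0 < β →
        (k:ℝ)*β/(2*(1+β)^k - 1) ≤ (k:ℝ)*α/(2*(1+α)^k - 1)) ∧
      (k:ℝ)*α/(2*(1+α)^k - 1) ∈ Set.Ioo (0:ℝ) (1/2) ∧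
      2*((k:ℝ)*α/(2*(1+α)^k - 1))
        * (1 + (1 - (k:ℝ)*α/(2*(1+α)^k - 1))/((k:ℝ)-1))^(k-1) = 1 ∧
      ∀ a : ℝ, a ∈ Set.Ioo (0:ℝ) (1/2) →
        2*a*(1 + (1-a)/((k:ℝ)-1))^(k-1) = 1 →
        a = (k:ℝ)*α/(2*(1+α)^k - 1) := by
  obtain ⟨m, rfl⟩ : ∃ m, k = m + 1 := ⟨k - 1, by omega⟩
  have hm1 : 1 ≤ m := by omega
  have hmR : (1:ℝ) ≤ (m:ℝ) := by exact_mod_cast hm1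
  have hmpos : (0:ℝ) < m := by linarith
  set G : ℝ → ℝ := fun x => 2*(1+x)^m*(1-(m:ℝ)*x) with hGdef
  have hG0 : G 0 = 2 := by simp [hGdef]
  have hGm : G ((m:ℝ)⁻¹) = 0 := by
    simp only [hGdef]
    have : 1 - (m:ℝ)*(m:ℝ)⁻¹ = 0 := by
      field_simp
      norm_num
    rw [this, mul_zero]
  obtain ⟨α, hαmem, hGα⟩ : ∃ α ∈ Set.Icc (0:ℝ) ((m:ℝ)⁻¹), G α = 1 := by
    have hGcont : ContinuousOn G (Set.Icc 0 ((m:ℝ)⁻¹)) := by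
      rw [hGdef]; fun_prop
    have h := intermediate_value_Icc' (a := (0:ℝ)) (b := (m:ℝ)⁻¹)
      (by positivity) hGcont
    have h1 : (1:ℝ) ∈ Set.Icc (G ((m:ℝ)⁻¹)) (G 0) := by
      rw [hG0, hGm]; constructor <;> norm_num
    obtain ⟨α, hα, hGα⟩ := h h1
    exact ⟨α, hα, hGα⟩
  have hα0 : 0 < α := by
    rcases lt_or_eq_of_le hαmem.1 with h | h
    · exact h
    · exfalso; rw [← h, hG0] at hGα; norm_num at hGα
  have h1α : (0:ℝ) < 1 + α := by linarith
  -- strict antitonicity of G on [0, ∞)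
  have hderiv : ∀ x : ℝ, HasDerivAt G
      (2*((m:ℝ)*(1+x)^(m-1)*1)*(1-(m:ℝ)*x) + 2*(1+x)^m*(-((m:ℝ)*1))) x := by
    intro x
    have h1 : HasDerivAt (fun x : ℝ => 1 + x) 1 x := (hasDerivAt_id x).const_add 1
    have h2 : HasDerivAt (fun x : ℝ => (1+x)^m) ((m:ℝ)*(1+x)^(m-1)*1) x := h1.pow m
    have h3 : HasDerivAt (fun x : ℝ => 2*(1+x)^m) (2*((m:ℝ)*(1+x)^(m-1)*1)) x :=
      h2.const_mul 2
    have h4 : HasDerivAt (fun x : ℝ => 1-(m:ℝ)*x) (-((m:ℝ)*1)) x :=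
      ((hasDerivAt_id x).const_mul (m:ℝ)).const_sub 1
    exact h3.mul h4
  have hanti : StrictAntiOn G (Set.Ici 0) := by
    apply strictAntiOn_of_deriv_neg (convex_Ici 0) (by fun_prop)
    intro x hx
    rw [interior_Ici] at hx
    rw [(hderiv x).deriv]
    have hx0 : (0:ℝ) < x := hx
    have hQ : (0:ℝ) < (1+x)^(m-1) := by positivity
    have hpow : (1+x)^m = (1+x)^(m-1)*(1+x) := by
      conv_lhs => rw [show m = (m-1)+1 by omega]
      rw [pow_succ]
    rw [hpow]
    nlinarith [mul_pos (mul_pos hmpos hQ) hx0,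
      mul_pos (mul_pos (mul_pos hmpos hmpos) hQ) hx0]
  have hgα : 2*(1+α)^m*(1-(m:ℝ)*α) = 1 := hGα
  have hP : (0:ℝ) < (1+α)^m := by positivity
  have hP1 : (1:ℝ) < (1+α)^m := by
    apply one_lt_pow₀ (by linarith) (by omega)
  have hpowk : (1+α)^(m+1) = (1+α)^m*(1+α) := pow_succ _ _
  have hD : 2*(1+α)^(m+1) - 1 = 2*((m:ℝ)+1)*(1+α)^m*α := by
    rw [hpowk]; linear_combination hgα
  have hDpos : (0:ℝ) < 2*(1+α)^(m+1) - 1 := by rw [hD]; positivity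
  have hA : ((m+1 : ℕ):ℝ)*α/(2*(1+α)^(m+1) - 1) = 1/(2*(1+α)^m) := by
    push_cast
    rw [hD, div_eq_div_iff (by positivity) (by positivity)]
    ring
  have hA' : ((m+1 : ℕ):ℝ)*α/(2*(1+α)^(m+1) - 1) = 1 - (m:ℝ)*α := by
    rw [hA, div_eq_iff (by positivity : (2*(1+α)^m) ≠ 0)]
    rw [eq_comm]
    linear_combination hgα
  refine ⟨α, hα0, ?_, ?_, ?_, ?_⟩
  · -- maximality
    intro β hβ
    have h1β : (0:ℝ) < 1 + β := by linarith
    have hβpow : (1:ℝ) ≤ (1+β)^(m+1) := one_le_pow₀ (by linarith)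
    have hDβpos : (0:ℝ) < 2*(1+β)^(m+1) - 1 := by
      nlinarith
    set t : ℝ := (β - α)/(1+α) with ht
    have hber : 1 + ((m+1:ℕ):ℝ)*t ≤ (1+t)^(m+1) := by
      apply one_add_mul_le_pow
      have : (-1:ℝ) < t := by
        rw [ht, neg_lt, ← neg_div]
        rw [div_lt_iff₀ h1α]
        nlinarith
      linarith
    have h1t : (1+α)*(1+t) = 1+β := by
      rw [ht]; field_simp; ring
    have hkey : 2*((m:ℝ)+1)*(1+α)^m*β ≤ 2*(1+β)^(m+1) - 1 := by
      have hmul := mul_le_mul_of_nonneg_left hber (le_of_lt (pow_pos h1α (m+1)))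
      rw [← mul_pow, h1t] at hmul
      have heq : (1+α)^(m+1)*(1+((m+1:ℕ):ℝ)*t)
          = (1+α)^(m+1) + ((m:ℝ)+1)*(β-α)*(1+α)^m := by
        rw [hpowk, ht]
        push_cast
        field_simp
      rw [heq] at hmul
      nlinarith [hD]
    rw [hA, div_le_div_iff₀ hDβpos (by positivity)]
    push_cast
    nlinarith [hkey]
  · -- value in (0, 1/2)
    rw [Set.mem_Ioo, hA]
    constructor
    · positivity
    · rw [div_lt_div_iff₀ (by positivity) (by norm_num)]
      linarith
  · -- the equation
    simp only [Nat.add_sub_cancel]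
    rw [hA']
    rw [show ((m+1:ℕ):ℝ) - 1 = (m:ℝ) by push_cast; ring]
    rw [show (1 - (1 - (m:ℝ)*α))/(m:ℝ) = α by field_simp; ring]
    linear_combination hgα
  · -- uniqueness
    intro a ha heq
    simp only [Nat.add_sub_cancel] at heq
    rw [show ((m+1:ℕ):ℝ) - 1 = (m:ℝ) by push_cast; ring] at heq
    set β' : ℝ := (1-a)/(m:ℝ) with hβ'
    have hβ'pos : 0 < β' := by
      rw [hβ']
      apply div_pos (by linarith [ha.2]) hmpos
    have hmβ' : (m:ℝ)*β' = 1 - a := by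
      rw [hβ']; field_simp
    have hGβ' : G β' = 1 := by
      simp only [hGdef]
      rw [hmβ']
      rw [show (1:ℝ) - (1 - a) = a by ring]
      linear_combination heq
    have hβα : β' = α := by
      apply hanti.injOn (Set.mem_Ici.mpr (le_of_lt hβ'pos))
        (Set.mem_Ici.mpr (le_of_lt hα0))
      rw [hGβ', hGα]
    rw [hA']
    have : (m:ℝ)*α = 1 - a := by rw [← hβα, hmβ']
    linarith
end
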